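/- arXiv:2007.05164 — 2 statements merged into one kernel-verified Lean document; each statement's English description precedes it below -/
import Mathlib

section
/- Assume additionally that w(A) ≥ 1 for every nonempty A ⊆ Fin m, and let A* ⊆ Fin m maximize v(A) − w(A) with v(A*) ≥ w(A*) + 1. For ℓ ∈ {1,…,k−1}, let X_ℓ be the subset of the ground set equal to the copy of A* inside M_ℓ (and empty in every other copy). Then: (1) for every ℓ ∈ {1,…,k−1}, X_ℓ maximizes v'_ℓ(S) − v'_{ℓ+1}(S) over all subsets S of the ground set; (2) v'_ℓ(X_i) ≤ 2k·max(v([m]), w([m])) for all ℓ ∈ {1,…,k} and i ∈ {1,…,k−1}; (3) for all 2 ≤ ℓ ≤ k−1, v'_ℓ(X_ℓ) ≥ v'_ℓ(X_{ℓ−1}) + 1, and v'_ℓ(X_{ℓ−1}) ≥ v'_ℓ(X_i) + 1 for all i ≤ ℓ−2. -/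
open Finset

/-- The `i`-th coordinate of a subset of the ground set consisting of `k−1`
disjoint copies of `Fin m`: the part of `S` inside copy `M_i`, viewed as a
subset of `Fin m`. (Copies are indexed `0,…,k−2`, copy `i` being `M_{i+1}`.) -/
def copyPart (m k : ℕ) (S : Finset (Fin (k - 1) × Fin m)) (i : Fin (k - 1)) :
    Finset (Fin m) :=
  (S.filter (fun p => p.1 = i)).image Prod.snd

/-- The scaled disjoint union `v_ℓ(S) = Σ_{i≥ℓ} (k+i)·v(S_i) + Σ_{i<ℓ} (k+i)·w(S_i)`
(indices `i ∈ {1,…,k−1}`, here represented by `Fin (k-1)` shifted by one). -/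
def scaledDU (m k : ℕ) (v w : Finset (Fin m) → ℕ) (ℓ : ℕ)
    (S : Finset (Fin (k - 1) × Fin m)) : ℕ :=
  ∑ i : Fin (k - 1), (k + (i : ℕ) + 1) *
    (if ℓ ≤ (i : ℕ) + 1 then v (copyPart m k S i) else w (copyPart m k S i))

/-- Item truncation at `y` of a set function: `u'(S) = max_{T ⊆ S, |T| ≤ y} u(T)`. -/
def itemTrunc {α : Type*} (y : ℕ) (u : Finset α → ℕ) (S : Finset α) : ℕ :=
  (S.powerset.filter (fun T => T.card ≤ y)).sup u

/-- `v'_ℓ`, the `ℓ`-th function of the instance `IT(v,w)`: the item truncation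
at `m` of the scaled disjoint union `v_ℓ`. -/
def ITfun (m k : ℕ) (v w : Finset (Fin m) → ℕ) (ℓ : ℕ)
    (S : Finset (Fin (k - 1) × Fin m)) : ℕ :=
  itemTrunc m (scaledDU m k v w ℓ) S


/-- The copy of `A ⊆ Fin m` inside copy `M_{i+1}` of the ground set
(empty in every other copy). -/
def copyEmbed (m k : ℕ) (i : Fin (k - 1)) (A : Finset (Fin m)) :
    Finset (Fin (k - 1) × Fin m) :=
  A.image (fun a => (i, a))

lemma copyPart_mono (m k : ℕ) {S S' : Finset (Fin (k-1) × Fin m)} (h : S ⊆ S') (i : Fin (k-1)) :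
    copyPart m k S i ⊆ copyPart m k S' i :=
  image_subset_image (filter_subset_filter _ h)

lemma le_itemTrunc {α : Type*} {y : ℕ} {u : Finset α → ℕ} {S T : Finset α}
    (hTS : T ⊆ S) (hTc : T.card ≤ y) : u T ≤ itemTrunc y u S :=
  Finset.le_sup (mem_filter.mpr ⟨mem_powerset.mpr hTS, hTc⟩)

lemma itemTrunc_exists {α : Type*} (y : ℕ) (u : Finset α → ℕ) (S : Finset α) :
    ∃ T, T ⊆ S ∧ T.card ≤ y ∧ itemTrunc y u S = u T := by
  have hne : (S.powerset.filter fun T => T.card ≤ y).Nonempty := ⟨∅, by simp⟩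
  obtain ⟨T, hT, hEq⟩ := Finset.exists_mem_eq_sup _ hne u
  exact ⟨T, mem_powerset.mp (mem_filter.mp hT).1, (mem_filter.mp hT).2, hEq⟩

lemma itemTrunc_eq_self {α : Type*} {y : ℕ} {u : Finset α → ℕ} {S : Finset α}
    (hm : ∀ T ⊆ S, u T ≤ u S) (hc : S.card ≤ y) : itemTrunc y u S = u S := by
  apply le_antisymm
  · exact Finset.sup_le fun T hT => hm T (mem_powerset.mp (mem_filter.mp hT).1)
  · exact le_itemTrunc (subset_refl S) hc

lemma copyPart_copyEmbed (m k : ℕ) (j i : Fin (k-1)) (A : Finset (Fin m)) :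
    copyPart m k (copyEmbed m k j A) i = if i = j then A else ∅ := by
  ext a
  by_cases h : i = j <;> simp [copyPart, copyEmbed, h, eq_comm (a := j)] <;> aesop

lemma scaledDU_copyEmbed (m k : ℕ) (v w : Finset (Fin m) → ℕ)
    (hv0 : v ∅ = 0) (hw0 : w ∅ = 0) (ℓ : ℕ) (j : Fin (k-1)) (A : Finset (Fin m)) :
    scaledDU m k v w ℓ (copyEmbed m k j A)
      = (k + (j:ℕ) + 1) * (if ℓ ≤ (j:ℕ) + 1 then v A else w A) := by
  unfold scaledDU
  rw [Finset.sum_eq_single j]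
  · rw [copyPart_copyEmbed]; simp
  · intro i _ hij
    rw [copyPart_copyEmbed, if_neg hij]
    split <;> simp [hv0, hw0]
  · simp

lemma scaledDU_mono (m k : ℕ) (v w : Finset (Fin m) → ℕ)
    (hv : ∀ A B, A ⊆ B → v A ≤ v B) (hw : ∀ A B, A ⊆ B → w A ≤ w B)
    (ℓ : ℕ) {S S' : Finset (Fin (k-1) × Fin m)} (h : S ⊆ S') :
    scaledDU m k v w ℓ S ≤ scaledDU m k v w ℓ S' := by
  unfold scaledDU
  apply Finset.sum_le_sum
  intro i _
  apply Nat.mul_le_mul_left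
  split
  · exact hv _ _ (copyPart_mono m k h i)
  · exact hw _ _ (copyPart_mono m k h i)

lemma ITfun_copyEmbed (m k : ℕ) (v w : Finset (Fin m) → ℕ)
    (hv0 : v ∅ = 0) (hw0 : w ∅ = 0)
    (hv : ∀ A B, A ⊆ B → v A ≤ v B) (hw : ∀ A B, A ⊆ B → w A ≤ w B)
    (ℓ : ℕ) (j : Fin (k-1)) (A : Finset (Fin m)) :
    ITfun m k v w ℓ (copyEmbed m k j A)
      = (k + (j:ℕ) + 1) * (if ℓ ≤ (j:ℕ) + 1 then v A else w A) := by
  rw [ITfun, itemTrunc_eq_self (fun T hT => scaledDU_mono m k v w hv hw ℓ hT),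
    scaledDU_copyEmbed m k v w hv0 hw0]
  calc (copyEmbed m k j A).card ≤ A.card := Finset.card_image_le
    _ ≤ m := by simpa using Finset.card_le_univ A

lemma scaledDU_succ_add (m k : ℕ) (v w : Finset (Fin m) → ℕ) (i : Fin (k-1))
    (T : Finset (Fin (k-1) × Fin m)) :
    scaledDU m k v w ((i:ℕ)+1) T + (k+(i:ℕ)+1) * w (copyPart m k T i)
      = scaledDU m k v w ((i:ℕ)+2) T + (k+(i:ℕ)+1) * v (copyPart m k T i) := by
  unfold scaledDU
  rw [← Finset.add_sum_erase _ _ (mem_univ i), ← Finset.add_sum_erase _ _ (mem_univ i)]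
  have hcongr : ∑ j ∈ univ.erase i, (k+(j:ℕ)+1) *
        (if (i:ℕ)+1 ≤ (j:ℕ)+1 then v (copyPart m k T j) else w (copyPart m k T j))
      = ∑ j ∈ univ.erase i, (k+(j:ℕ)+1) *
        (if (i:ℕ)+2 ≤ (j:ℕ)+1 then v (copyPart m k T j) else w (copyPart m k T j)) := by
    refine Finset.sum_congr rfl fun j hj => ?_
    have hji : (j:ℕ) ≠ (i:ℕ) := fun h => (mem_erase.mp hj).1 (Fin.ext h)
    congr 1
    by_cases h : (i:ℕ)+1 ≤ (j:ℕ)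
    · rw [if_pos (by omega), if_pos (by omega)]
    · rw [if_neg (by omega), if_neg (by omega)]
  rw [hcongr, if_pos (le_refl _), if_neg (by omega)]
  ring


/-- The combinatorial premises for Compatibility of `IT(v,w)`: with
`X_ℓ` the copy of a maximizer `A*` of `v − w` placed inside `M_ℓ`,
(1) `X_ℓ` maximizes `v'_ℓ − v'_{ℓ+1}`; (2) `v'_ℓ(X_i) ≤ 2k·max(v([m]),w([m]))`;
(3) `v'_ℓ(X_ℓ) ≥ v'_ℓ(X_{ℓ−1}) + 1 ≥ v'_ℓ(X_i) + 2` for `i ≤ ℓ−2`. -/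
theorem IT_compatibility_premises (m k : ℕ) (hk : 2 ≤ k)
    (v w : Finset (Fin m) → ℕ)
    (hv0 : v ∅ = 0) (hw0 : w ∅ = 0)
    (hvmono : ∀ A B : Finset (Fin m), A ⊆ B → v A ≤ v B)
    (hwmono : ∀ A B : Finset (Fin m), A ⊆ B → w A ≤ w B)
    (hwpos : ∀ A : Finset (Fin m), A.Nonempty → 1 ≤ w A)
    (Astar : Finset (Fin m))
    (hAmax : ∀ B : Finset (Fin m), (v B : ℤ) - w B ≤ (v Astar : ℤ) - w Astar)
    (hAgap : w Astar + 1 ≤ v Astar) :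
    -- (1) for every ℓ ∈ {1,…,k−1} (here ℓ = i+1 for i : Fin (k−1)),
    --     X_ℓ maximizes v'_ℓ(S) − v'_{ℓ+1}(S)
    (∀ i : Fin (k - 1), ∀ S : Finset (Fin (k - 1) × Fin m),
      (ITfun m k v w ((i : ℕ) + 1) S : ℤ) - ITfun m k v w ((i : ℕ) + 2) S
        ≤ (ITfun m k v w ((i : ℕ) + 1) (copyEmbed m k i Astar) : ℤ)
          - ITfun m k v w ((i : ℕ) + 2) (copyEmbed m k i Astar)) ∧
    -- (2) v'_ℓ(X_i) ≤ 2k·max(v([m]), w([m])) for all ℓ ∈ {1,…,k}, i ∈ {1,…,k−1}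
    (∀ ℓ : ℕ, 1 ≤ ℓ → ℓ ≤ k → ∀ i : Fin (k - 1),
      ITfun m k v w ℓ (copyEmbed m k i Astar)
        ≤ 2 * k * max (v Finset.univ) (w Finset.univ)) ∧
    -- (3) for 2 ≤ ℓ ≤ k−1: v'_ℓ(X_ℓ) ≥ v'_ℓ(X_{ℓ−1}) + 1 and
    --     v'_ℓ(X_{ℓ−1}) ≥ v'_ℓ(X_i) + 1 for 1 ≤ i ≤ ℓ−2
    (∀ ℓ : ℕ, ∀ _h2 : 2 ≤ ℓ, ∀ _hℓ : ℓ ≤ k - 1,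
      (ITfun m k v w ℓ (copyEmbed m k ⟨ℓ - 2, by omega⟩ Astar) + 1
          ≤ ITfun m k v w ℓ (copyEmbed m k ⟨ℓ - 1, by omega⟩ Astar)) ∧
      (∀ i : ℕ, ∀ _hi1 : 1 ≤ i, ∀ _hi2 : i ≤ ℓ - 2,
        ITfun m k v w ℓ (copyEmbed m k ⟨i - 1, by omega⟩ Astar) + 1
          ≤ ITfun m k v w ℓ (copyEmbed m k ⟨ℓ - 2, by omega⟩ Astar))) := by
  
  have hAne : Astar.Nonempty := by
    rcases Astar.eq_empty_or_nonempty with h | h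
    · rw [h, hv0, hw0] at hAgap; omega
    · exact h
  have hwA : 1 ≤ w Astar := hwpos Astar hAne
  have hIT := ITfun_copyEmbed m k v w hv0 hw0 hvmono hwmono
  refine ⟨?_, ?_, ?_⟩
  · -- (1)
    intro i S
    obtain ⟨T, hTS, hTc, hTeq⟩ := itemTrunc_exists m (scaledDU m k v w ((i:ℕ)+1)) S
    have h2 : scaledDU m k v w ((i:ℕ)+2) T ≤ ITfun m k v w ((i:ℕ)+2) S :=
      le_itemTrunc hTS hTc
    have hdiff := scaledDU_succ_add m k v w i T
    have hmax := hAmax (copyPart m k T i)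
    have hX1 : ITfun m k v w ((i:ℕ)+1) (copyEmbed m k i Astar) = (k+(i:ℕ)+1) * v Astar := by
      rw [hIT, if_pos (le_refl _)]
    have hX2 : ITfun m k v w ((i:ℕ)+2) (copyEmbed m k i Astar) = (k+(i:ℕ)+1) * w Astar := by
      rw [hIT, if_neg (by omega)]
    rw [show ITfun m k v w ((i:ℕ)+1) S = scaledDU m k v w ((i:ℕ)+1) T from hTeq, hX1, hX2]
    have hmul : ((k:ℤ)+(i:ℕ)+1) * ((v (copyPart m k T i) : ℤ) - w (copyPart m k T i))
        ≤ ((k:ℤ)+(i:ℕ)+1) * ((v Astar : ℤ) - w Astar) := by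
      apply mul_le_mul_of_nonneg_left hmax (by positivity)
    zify at hdiff h2
    push_cast
    nlinarith [hdiff, h2, hmul]
  · -- (2)
    intro ℓ _ _ i
    rw [hIT]
    have hle : (if ℓ ≤ (i:ℕ)+1 then v Astar else w Astar)
        ≤ max (v Finset.univ) (w Finset.univ) := by
      split
      · exact le_trans (hvmono _ _ (Finset.subset_univ _)) (le_max_left _ _)
      · exact le_trans (hwmono _ _ (Finset.subset_univ _)) (le_max_right _ _)
    have hki : k + (i:ℕ) + 1 ≤ 2 * k := by have := i.2; omega
    exact le_trans (Nat.mul_le_mul hki hle) (le_refl _)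
  · -- (3)
    intro ℓ h2 hℓ
    obtain ⟨e, rfl⟩ : ∃ e, ℓ = e + 2 := ⟨ℓ - 2, by omega⟩
    constructor
    · rw [hIT, hIT]
      have hi1 : ((⟨e + 2 - 2, by omega⟩ : Fin (k-1)) : ℕ) = e := rfl
      have hi2 : ((⟨e + 2 - 1, by omega⟩ : Fin (k-1)) : ℕ) = e + 1 := rfl
      rw [hi1, hi2, if_neg (by omega), if_pos (by omega)]
      nlinarith [Nat.mul_le_mul_left (k + e + 2) hAgap]
    · intro i hi1 hi2
      rw [hIT, hIT]
      have hii : ((⟨i - 1, by omega⟩ : Fin (k-1)) : ℕ) = i - 1 := rfl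
      have hie : ((⟨e + 2 - 2, by omega⟩ : Fin (k-1)) : ℕ) = e := rfl
      rw [hii, hie, if_neg (by omega), if_neg (by omega)]
      have : k + (i - 1) + 1 + 1 ≤ k + e + 1 := by omega
      nlinarith [Nat.mul_le_mul_right (w Astar) this, hwA]
end

section
/- For every ℓ ∈ {1,…,k−1}: max over all subsets T of the ground set of (v''_ℓ(T) − v''_{ℓ+1}(T)) ≥ (k+ℓ) · max over all A ⊆ Fin m of (v(A) − w(A)), where the differences are taken in ℤ. -/
open Finset

/-- `v''_ℓ`, the `ℓ`-th function of the instance `VT(v,w)`: the value truncation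
at `x = 2k·v([m])` of the scaled disjoint union `v_ℓ`. -/
def VTfun (m k : ℕ) (v w : Finset (Fin m) → ℕ) (ℓ : ℕ)
    (S : Finset (Fin (k - 1) × Fin m)) : ℕ :=
  min (scaledDU m k v w ℓ S) (2 * k * v (Finset.univ : Finset (Fin m)))

lemma copyPart_single (m k : ℕ) (i₀ i : Fin (k - 1)) (A : Finset (Fin m)) :
    copyPart m k ({i₀} ×ˢ A) i = if i = i₀ then A else ∅ := by
  unfold copyPart
  split_ifs with h
  · subst h; ext a; simp
  · ext a
    simp only [Finset.mem_image, Finset.mem_filter, Finset.mem_product,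
      Finset.mem_singleton, Finset.notMem_empty, iff_false]
    rintro ⟨p, ⟨⟨hp1, _⟩, hp2⟩, _⟩
    exact h (hp2 ▸ hp1 ▸ rfl)

lemma scaledDU_single (m k : ℕ) (v w : Finset (Fin m) → ℕ)
    (hv0 : v ∅ = 0) (hw0 : w ∅ = 0) (L : ℕ) (i₀ : Fin (k - 1)) (A : Finset (Fin m)) :
    scaledDU m k v w L ({i₀} ×ˢ A) =
      (k + (i₀ : ℕ) + 1) * (if L ≤ (i₀ : ℕ) + 1 then v A else w A) := by
  unfold scaledDU
  rw [Finset.sum_eq_single i₀]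
  · simp only [copyPart_single, if_pos rfl]
    simp
  · intro i _ hi
    simp only [copyPart_single, if_neg hi]
    simp [hv0, hw0]
  · simp

/-- For every `ℓ ∈ {1,…,k−1}`, the maximum over subsets `T` of the ground set
of `v''_ℓ(T) − v''_{ℓ+1}(T)` is at least `(k+ℓ)` times the maximum over
`A ⊆ Fin m` of `v(A) − w(A)` (differences in `ℤ`). -/
theorem VT_consecutive_difference_ge (m k : ℕ) (hk : 2 ≤ k)
    (v w : Finset (Fin m) → ℕ)
    (hv0 : v ∅ = 0) (hw0 : w ∅ = 0)
    (hvmono : ∀ A B : Finset (Fin m), A ⊆ B → v A ≤ v B)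
    (hwmono : ∀ A B : Finset (Fin m), A ⊆ B → w A ≤ w B) :
    ∀ ℓ : ℕ, 1 ≤ ℓ → ℓ ≤ k - 1 →
      (k + ℓ : ℤ) *
          ((Finset.univ : Finset (Fin m)).powerset.sup'
            ⟨∅, Finset.empty_mem_powerset _⟩
            (fun A => (v A : ℤ) - w A))
        ≤ (Finset.univ : Finset (Fin (k - 1) × Fin m)).powerset.sup'
            ⟨∅, Finset.empty_mem_powerset _⟩
            (fun T => (VTfun m k v w ℓ T : ℤ) - VTfun m k v w (ℓ + 1) T) := by
  intro ℓ hℓ1 hℓk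
  obtain ⟨A, _, hA⟩ := Finset.exists_mem_eq_sup'
    (⟨∅, Finset.empty_mem_powerset _⟩ :
      ((Finset.univ : Finset (Fin m)).powerset).Nonempty)
    (fun A => (v A : ℤ) - w A)
  rw [hA]
  have hi₀ : ℓ - 1 < k - 1 := by omega
  set i₀ : Fin (k - 1) := ⟨ℓ - 1, hi₀⟩ with hi₀def
  set T : Finset (Fin (k - 1) × Fin m) := {i₀} ×ˢ A with hT
  have hmem : T ∈ (Finset.univ : Finset (Fin (k - 1) × Fin m)).powerset :=
    Finset.mem_powerset.2 (Finset.subset_univ _)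
  refine le_trans ?_ (Finset.le_sup' _ hmem)
  have hci : (i₀ : ℕ) = ℓ - 1 := rfl
  have h1 : scaledDU m k v w ℓ T = (k + ℓ) * v A := by
    rw [hT, scaledDU_single m k v w hv0 hw0, hci, if_pos (by omega)]
    congr 1; omega
  have h2 : scaledDU m k v w (ℓ + 1) T = (k + ℓ) * w A := by
    rw [hT, scaledDU_single m k v w hv0 hw0, hci, if_neg (by omega)]
    congr 1; omega
  have hV1 : VTfun m k v w ℓ T = (k + ℓ) * v A := by
    rw [VTfun, h1, min_eq_left]
    calc (k + ℓ) * v A ≤ 2 * k * v A := by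
          apply Nat.mul_le_mul_right; omega
      _ ≤ 2 * k * v Finset.univ := by
          apply Nat.mul_le_mul_left
          exact hvmono A Finset.univ (Finset.subset_univ A)
  have hV2 : VTfun m k v w (ℓ + 1) T ≤ (k + ℓ) * w A := by
    rw [VTfun, h2.symm]; exact min_le_left _ _
  rw [hV1]
  have : (VTfun m k v w (ℓ + 1) T : ℤ) ≤ (k + ℓ) * w A := by exact_mod_cast hV2
  push_cast
  nlinarith [this]
end
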